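/- arXiv:math/0509510 — 6 statements merged into one kernel-verified Lean document; each statement's English description precedes it below -/
import Mathlib

section
/- Let L be a Lie algebra with zero centre and let I be an ideal of L. Then the annihilator of I in L is zero if and only if the right annihilator of A_L(I) in A(L) is zero, where A(L) is the associative subalgebra of End(L) generated by the adjoint maps ad_x for x in L, and A_L(I) is the subalgebra generated by ad_y for y in I. -/
/-- For a Lie algebra `L` with zero centre and an ideal `I` of `L`,
`Ann_L(I) = 0` iff the right annihilator of `A_L(I)` in `A(L)` is zero. -/
theorem stmt0 {Φ : Type*} [CommRing Φ] {L : Type*} [LieRing L] [LieAlgebra Φ L]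
    (hZ : ∀ x : L, (∀ y : L, ⁅x, y⁆ = 0) → x = 0)
    (I : LieIdeal Φ L) :
    (∀ a : L, (∀ y ∈ I, ⁅a, y⁆ = 0) → a = 0) ↔
      (∀ μ ∈ NonUnitalAlgebra.adjoin Φ (Set.range (LieAlgebra.ad Φ L)),
        (∀ ν ∈ NonUnitalAlgebra.adjoin Φ ((LieAlgebra.ad Φ L) '' (I : Set L)),
          ν * μ = 0) → μ = 0) := by
  constructor
  · intro hAnn μ _ h
    ext x
    refine hAnn (μ x) fun y hy => ?_
    have h1 : LieAlgebra.ad Φ L y * μ = 0 :=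
      h _ (NonUnitalAlgebra.subset_adjoin Φ ⟨y, hy, rfl⟩)
    have h2 := LinearMap.congr_fun h1 x
    simp only [Module.End.mul_apply, LieAlgebra.ad_apply, LinearMap.zero_apply] at h2
    rw [← lie_skew, h2, neg_zero]
  · intro hA a ha
    have hada : LieAlgebra.ad Φ L a = 0 := by
      refine hA _ (NonUnitalAlgebra.subset_adjoin Φ ⟨a, rfl⟩) fun ν hν => ?_
      induction hν using NonUnitalAlgebra.adjoin_induction with
      | mem x hx =>
        obtain ⟨y, hy, rfl⟩ := hx
        ext z
        simp only [Module.End.mul_apply, LieAlgebra.ad_apply, LinearMap.zero_apply]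
        rw [leibniz_lie]
        have h1 : ⁅y, a⁆ = 0 := by rw [← lie_skew, ha y hy, neg_zero]
        have hmem : ⁅y, z⁆ ∈ I := by
          rw [← lie_skew y z]
          exact neg_mem (I.lie_mem hy)
        have h2 : ⁅a, ⁅y, z⁆⁆ = 0 := ha _ hmem
        rw [h1, h2, zero_lie, add_zero]
      | add x y hx hy px py => rw [add_mul, px, py, add_zero]
      | zero => rw [zero_mul]
      | mul x y hx hy px py => rw [mul_assoc, py, mul_zero]
      | smul r x hx px => rw [smul_mul_assoc, px, smul_zero]
    exact hZ a fun y => by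
      have := LinearMap.congr_fun hada y
      simpa using this
end

section
/- Let L ⊆ Q be an extension of Lie algebras such that Q is a weak algebra of quotients of L, and let I be an ideal of L with Ann_L(I) = 0. Then the right annihilator of A_Q(I) in A(Q) is zero. -/
/-- If `Q` is a weak algebra of quotients of `L` and `I` is an ideal
of `L` with `Ann_L(I) = 0`, then the right annihilator of `A_Q(I)` in `A(Q)` is
zero. -/
theorem stmt4 {Φ : Type*} [CommRing Φ] {Q : Type*} [LieRing Q] [LieAlgebra Φ Q]
    (L : LieSubalgebra Φ Q)
    (hweak : ∀ q : Q, q ≠ 0 → ∃ x ∈ L, ⁅x, q⁆ ≠ 0 ∧ ⁅x, q⁆ ∈ L)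
    (I : Submodule Φ Q)
    (hIL : (I : Set Q) ⊆ L)
    (hIdeal : ∀ x ∈ L, ∀ y ∈ I, ⁅x, y⁆ ∈ I)
    (hAnn : ∀ a ∈ L, (∀ y ∈ I, ⁅a, y⁆ = (0 : Q)) → a = 0) :
    ∀ μ ∈ NonUnitalAlgebra.adjoin Φ (Set.range (LieAlgebra.ad Φ Q)),
      (∀ ν ∈ NonUnitalAlgebra.adjoin Φ ((LieAlgebra.ad Φ Q) '' (I : Set Q)),
        ν * μ = 0) → μ = 0 := by
  intro μ _ h
  -- Key: Ann_Q(I) = 0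
  have key : ∀ q : Q, (∀ y ∈ I, ⁅y, q⁆ = (0 : Q)) → q = 0 := by
    intro q hq
    by_contra hq0
    obtain ⟨x, hxL, hne, hmem⟩ := hweak q hq0
    apply hne
    apply hAnn _ hmem
    intro y hy
    have h1 : ⁅⁅x, q⁆, y⁆ = ⁅x, ⁅q, y⁆⁆ - ⁅q, ⁅x, y⁆⁆ := lie_lie x q y
    have h2 : ⁅q, y⁆ = (0 : Q) := by
      rw [← lie_skew, hq y hy, neg_zero]
    have h3 : ⁅q, ⁅x, y⁆⁆ = (0 : Q) := by
      rw [← lie_skew, hq _ (hIdeal x hxL y hy), neg_zero]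
    rw [h1, h2, h3, lie_zero, sub_zero]
  ext q
  apply key
  intro y hy
  have hν : LieAlgebra.ad Φ Q y ∈
      NonUnitalAlgebra.adjoin Φ ((LieAlgebra.ad Φ Q) '' (I : Set Q)) :=
    NonUnitalAlgebra.subset_adjoin Φ ⟨y, hy, rfl⟩
  have := h _ hν
  calc ⁅y, μ q⁆ = (LieAlgebra.ad Φ Q y * μ) q := rfl
    _ = (0 : Module.End Φ Q) q := by rw [this]
    _ = 0 := rfl
end

section
/- Let L be a semiprime Lie algebra and I an ideal of L with Ann_L(I) = 0. Then Ann_L(I^s) = 0 for every s ≥ 1, where I^s denotes the s-th power of I under the bracket (I^2 = [I,I], etc.). -/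
section
variable {Φ : Type*} [CommRing Φ] {L : Type*} [LieRing L] [LieAlgebra Φ L]

/-- Powers of an ideal under the bracket: `I^1 = I`, `I^{s+1} = [I^s, I^s]`
(so `I^2 = [I,I]`, etc.); here `dpow I s` is `I^{s+1}`. -/
def dpow (I : LieIdeal Φ L) : ℕ → LieIdeal Φ L
  | 0 => I
  | s + 1 => ⁅dpow I s, dpow I s⁆

/-- The annihilator of an ideal is an ideal. -/
def annIdeal (J : LieIdeal Φ L) : LieIdeal Φ L where
  carrier := {a | ∀ y ∈ J, ⁅a, y⁆ = 0}
  add_mem' := by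
    intro a b ha hb y hy
    rw [add_lie, ha y hy, hb y hy, add_zero]
  zero_mem' := by intro y hy; simp
  smul_mem' := by
    intro c a ha y hy
    rw [smul_lie, ha y hy, smul_zero]
  lie_mem := by
    intro z a ha y hy
    have h1 : ⁅a, y⁆ = 0 := ha y hy
    have h2 : ⁅a, ⁅z, y⁆⁆ = 0 := ha _ (J.lie_mem hy)
    rw [lie_lie, h1, h2, lie_zero, sub_zero]

theorem mem_annIdeal {J : LieIdeal Φ L} {a : L} :
    a ∈ annIdeal J ↔ ∀ y ∈ J, ⁅a, y⁆ = 0 := Iff.rfl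

theorem ann_step (hsemi : ∀ J : LieIdeal Φ L, ⁅J, J⁆ = ⊥ → J = ⊥)
    (J : LieIdeal Φ L) (hJ : ∀ a : L, (∀ y ∈ J, ⁅a, y⁆ = 0) → a = 0) :
    ∀ a : L, (∀ y ∈ ⁅J, J⁆, ⁅a, y⁆ = 0) → a = 0 := by
  intro a ha
  set A : LieIdeal Φ L := annIdeal ⁅J, J⁆ with hA
  set C : LieIdeal Φ L := A ⊓ J with hC
  have hAann : ⁅A, (⁅J, J⁆ : LieIdeal Φ L)⁆ = ⊥ := by
    rw [LieSubmodule.lie_eq_bot_iff]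
    intro b hb y hy
    exact (mem_annIdeal.mp hb) y hy
  have h1 : (⁅C, C⁆ : LieIdeal Φ L) ≤ A :=
    le_trans (LieSubmodule.mono_lie le_rfl inf_le_left) (LieSubmodule.lie_le_right A C)
  have key : ⁅(⁅C, C⁆ : LieIdeal Φ L), (⁅C, C⁆ : LieIdeal Φ L)⁆ = ⊥ := by
    rw [eq_bot_iff]
    refine le_trans (LieSubmodule.mono_lie h1
      (LieSubmodule.mono_lie inf_le_right inf_le_right)) ?_
    rw [hAann]
  have hCbot : C = ⊥ := hsemi _ (hsemi _ key)
  apply hJ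
  intro y hy
  have h1 : ⁅a, y⁆ ∈ A := by
    rw [mem_annIdeal]
    intro z hz
    have hz1 : ⁅y, z⁆ ∈ (⁅J, J⁆ : LieIdeal Φ L) := (⁅J, J⁆ : LieIdeal Φ L).lie_mem hz
    rw [lie_lie, ha _ hz1, ha z hz, lie_zero, sub_zero]
  have h2 : ⁅a, y⁆ ∈ J := J.lie_mem hy
  have hm : ⁅a, y⁆ ∈ C := ⟨h1, h2⟩
  rw [hCbot] at hm
  exact hm

end

/-- If `L` is a semiprime Lie algebra and `I` an ideal of `L` with
`Ann_L(I) = 0`, then `Ann_L(I^s) = 0` for every `s ≥ 1`. -/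
theorem stmt6 {Φ : Type*} [CommRing Φ] {L : Type*} [LieRing L] [LieAlgebra Φ L]
    (hsemi : ∀ J : LieIdeal Φ L, ⁅J, J⁆ = ⊥ → J = ⊥)
    (I : LieIdeal Φ L)
    (hAnn : ∀ a : L, (∀ y ∈ I, ⁅a, y⁆ = 0) → a = 0) :
    ∀ s : ℕ, ∀ a : L, (∀ y ∈ dpow I s, ⁅a, y⁆ = 0) → a = 0 := by
  intro s
  induction s with
  | zero => exact hAnn
  | succ n ih => exact ann_step hsemi (dpow I n) ih
end

section
/- Let A be a semiprime 2-torsion free associative algebra and Q a subalgebra of the Martindale symmetric algebra of quotients Q_s(A) containing A. Let q ∈ Q and suppose there is an essential ideal I of A with qI + Iq ⊆ A and [q,[I,I]] = 0. Then [q,I] = 0. -/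
section
variable (R : Type*) [NonUnitalRing R]

/-- `I` is a two-sided ideal of the subring `A` of `R`. -/
def IsIdealOfSub (A : NonUnitalSubring R) (I : AddSubgroup R) : Prop :=
  (I : Set R) ⊆ A ∧ ∀ a ∈ A, ∀ x ∈ I, a * x ∈ I ∧ x * a ∈ I

/-- `I` is an essential ideal of the subring `A` of `R`: it meets every nonzero
ideal of `A` nontrivially. -/
def IsEssentialIdealOfSub (A : NonUnitalSubring R) (I : AddSubgroup R) : Prop :=
  IsIdealOfSub R A I ∧
    ∀ J : AddSubgroup R, IsIdealOfSub R A J → J ≠ ⊥ → ∃ x ∈ I, x ∈ J ∧ x ≠ 0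

/-- The subring `A` of `R` is semiprime: no nonzero ideal of `A` has zero square. -/
def IsSemiprimeSub (A : NonUnitalSubring R) : Prop :=
  ∀ I : AddSubgroup R, IsIdealOfSub R A I → (∀ x ∈ I, ∀ y ∈ I, x * y = 0) → I = ⊥

/-- `Q` (the ambient ring `R`) sits inside the Martindale symmetric ring of
quotients `Q_s(A)`: every element is absorbed two-sidedly into `A` by some
essential ideal, and essential ideals of `A` have zero left and right
annihilator in `R`. -/
def IsSymmetricQuotientRingOf (A : NonUnitalSubring R) : Prop :=
  (∀ q : R, ∃ I : AddSubgroup R, IsEssentialIdealOfSub R A I ∧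
      ∀ x ∈ I, q * x ∈ A ∧ x * q ∈ A) ∧
    ∀ q : R, q ≠ 0 → ∀ I : AddSubgroup R, IsEssentialIdealOfSub R A I →
      (∃ x ∈ I, x * q ≠ 0) ∧ (∃ x ∈ I, q * x ≠ 0)

end

section auxlemmas
variable {R : Type*} [NonUnitalRing R] {A : NonUnitalSubring R} {I : AddSubgroup R}

/-- Right annihilator of an essential ideal is zero. -/
lemma stmt9_annR (hQs : IsSymmetricQuotientRingOf R A)
    (hIess : IsEssentialIdealOfSub R A I) {r : R} (h : ∀ y ∈ I, r * y = 0) : r = 0 := by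
  by_contra hr
  obtain ⟨x, hx, hne⟩ := (hQs.2 r hr I hIess).2
  exact hne (h x hx)

/-- Left annihilator of an essential ideal is zero. -/
lemma stmt9_annL (hQs : IsSymmetricQuotientRingOf R A)
    (hIess : IsEssentialIdealOfSub R A I) {r : R} (h : ∀ y ∈ I, y * r = 0) : r = 0 := by
  by_contra hr
  obtain ⟨x, hx, hne⟩ := (hQs.2 r hr I hIess).1
  exact hne (h x hx)

/-- If `c ∈ A` and `c I c = 0` then `c = 0` (semiprimeness plus essentiality). -/
lemma stmt9_midzero (hsemi : IsSemiprimeSub R A) (hQs : IsSymmetricQuotientRingOf R A)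
    (hIess : IsEssentialIdealOfSub R A I) {c : R} (hcA : c ∈ A)
    (h : ∀ t ∈ I, c * t * c = 0) : c = 0 := by
  have hIA : ∀ {y : R}, y ∈ I → y ∈ A := fun hy => hIess.1.1 hy
  set S : Set R := {z : R | ∃ x ∈ I, ∃ y ∈ I, z = x * c * y} with hS
  set T : AddSubgroup R := AddSubgroup.closure S with hT
  have hgen : ∀ x ∈ I, ∀ y ∈ I, x * c * y ∈ T := fun x hx y hy =>
    AddSubgroup.subset_closure ⟨x, hx, y, hy, rfl⟩
  have hTsubA : ∀ z ∈ T, z ∈ A := by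
    intro z hz
    refine AddSubgroup.closure_induction (p := fun z _ => z ∈ A) ?_ A.zero_mem
      (fun x y _ _ hx hy => A.add_mem hx hy) (fun x _ hx => A.neg_mem hx) hz
    rintro z ⟨x, hx, y, hy, rfl⟩
    exact A.mul_mem (A.mul_mem (hIA hx) hcA) (hIA hy)
  have hTI : IsIdealOfSub R A T := by
    refine ⟨fun z hz => hTsubA z hz, fun a ha z hz => ?_⟩
    refine AddSubgroup.closure_induction
      (p := fun z _ => a * z ∈ T ∧ z * a ∈ T) ?_ ?_ ?_ ?_ hz
    · rintro z ⟨x, hx, y, hy, rfl⟩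
      constructor
      · have e : a * (x * c * y) = (a * x) * c * y := by noncomm_ring
        rw [e]
        exact hgen _ (hIess.1.2 a ha x hx).1 y hy
      · have e : (x * c * y) * a = x * c * (y * a) := by noncomm_ring
        rw [e]
        exact hgen x hx _ (hIess.1.2 a ha y hy).2
    · simp [T.zero_mem]
    · intro x y _ _ hx hy
      exact ⟨by rw [mul_add]; exact T.add_mem hx.1 hy.1,
             by rw [add_mul]; exact T.add_mem hx.2 hy.2⟩
    · intro x _ hx
      exact ⟨by rw [mul_neg]; exact T.neg_mem hx.1,
             by rw [neg_mul]; exact T.neg_mem hx.2⟩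
  have hTsq : ∀ z ∈ T, ∀ w ∈ T, z * w = 0 := by
    have hgenz : ∀ z ∈ S, ∀ w ∈ T, z * w = 0 := by
      rintro z ⟨x, hx, y, hy, rfl⟩ w hw
      refine AddSubgroup.closure_induction
        (p := fun w _ => (x * c * y) * w = 0) ?_ (by simp) ?_ ?_ hw
      · rintro w ⟨x', hx', y', hy', rfl⟩
        have key : (x * c * y) * (x' * c * y') = x * ((c * (y * x') * c) * y') := by
          noncomm_ring
        rw [key, h (y * x') ((hIess.1.2 y (hIA hy) x' hx').1)]
        simp
      · intro u v _ _ hu hv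
        rw [mul_add, hu, hv, add_zero]
      · intro u _ hu
        rw [mul_neg, hu, neg_zero]
    intro z hz
    refine AddSubgroup.closure_induction
      (p := fun z _ => ∀ w ∈ T, z * w = 0) (fun z hz => hgenz z hz) (by simp) ?_ ?_ hz
    · intro u v _ _ hu hv w hw
      rw [add_mul, hu w hw, hv w hw, add_zero]
    · intro u _ hu w hw
      rw [neg_mul, hu w hw, neg_zero]
  have hTbot : T = ⊥ := hsemi T hTI hTsq
  have hzero : ∀ x ∈ I, ∀ y ∈ I, x * c * y = 0 := by
    intro x hx y hy
    have hm := hgen x hx y hy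
    rw [hTbot, AddSubgroup.mem_bot] at hm
    exact hm
  have hxc : ∀ x ∈ I, x * c = 0 := fun x hx =>
    stmt9_annR hQs hIess (fun y hy => hzero x hx y hy)
  exact stmt9_annL hQs hIess hxc

end auxlemmas

/-- Herstein-type lemma: Let `A` be a semiprime `2`-torsion free
subring of `Q` (with `A ⊆ Q ⊆ Q_s(A)`).  If `q ∈ Q` and `I` is an essential
ideal of `A` with `qI + Iq ⊆ A` and `[q,[I,I]] = 0`, then `[q,I] = 0`. -/
theorem stmt9 {R : Type*} [NonUnitalRing R] (A : NonUnitalSubring R)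
    (hsemi : IsSemiprimeSub R A)
    (h2 : ∀ x ∈ A, x + x = 0 → x = 0)
    (hQs : IsSymmetricQuotientRingOf R A)
    (q : R) (I : AddSubgroup R)
    (hIess : IsEssentialIdealOfSub R A I)
    (habs : ∀ x ∈ I, q * x ∈ A ∧ x * q ∈ A)
    (hcomm : ∀ u ∈ I, ∀ v ∈ I, q * (u * v - v * u) = (u * v - v * u) * q) :
    ∀ x ∈ I, q * x = x * q := by
  have hIA : ∀ {y : R}, y ∈ I → y ∈ A := fun hy => hIess.1.1 hy
  have hmulII : ∀ {y z : R}, y ∈ I → z ∈ I → y * z ∈ I := fun hy hz =>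
    (hIess.1.2 _ (hIA hy) _ hz).1
  have hmulAI : ∀ {a y : R}, a ∈ A → y ∈ I → a * y ∈ I := fun ha hy =>
    (hIess.1.2 _ ha _ hy).1
  have hmulIA : ∀ {y a : R}, y ∈ I → a ∈ A → y * a ∈ I := fun hy ha =>
    (hIess.1.2 _ ha _ hy).2
  have hdA : ∀ {v : R}, v ∈ I → q * v - v * q ∈ A := fun hv =>
    A.sub_mem (habs _ hv).1 (habs _ hv).2
  -- Step 1 : dv · [v,t] = 0
  have hs1 : ∀ v ∈ I, ∀ t ∈ I, (q * v - v * q) * (v * t - t * v) = 0 := by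
    intro v hv t ht
    have e1 := hcomm v hv (v * t) (hmulII hv ht)
    have e2 := hcomm v hv t ht
    have key : (q * v - v * q) * (v * t - t * v) =
        (q * (v * (v * t) - v * t * v) - (v * (v * t) - v * t * v) * q)
          - (v * (q * (v * t - t * v)) - v * ((v * t - t * v) * q)) := by noncomm_ring
    rw [key, e1, e2]
    simp
  -- Step 1' : dv · w · [v,t] = 0
  have hs2 : ∀ v ∈ I, ∀ w ∈ I, ∀ t ∈ I, (q * v - v * q) * w * (v * t - t * v) = 0 := by
    intro v hv w hw t ht
    have e1 := hs1 v hv (w * t) (hmulII hw ht)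
    have e2 := hs1 v hv w hw
    have key : (q * v - v * q) * w * (v * t - t * v) =
        (q * v - v * q) * (v * (w * t) - w * t * v)
          - ((q * v - v * q) * (v * w - w * v)) * t := by noncomm_ring
    rw [key, e1, e2]
    simp
  -- Step 2 : c := [v, dv] kills [v, x] on the left
  have hc1 : ∀ v ∈ I, ∀ t ∈ I,
      (v * (q * v - v * q) - (q * v - v * q) * v) * (v * t - t * v) = 0 := by
    intro v hv t ht
    have e1 := hs1 v hv t ht
    have e2 := hs2 v hv v hv t ht
    have key : (v * (q * v - v * q) - (q * v - v * q) * v) * (v * t - t * v) =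
        v * ((q * v - v * q) * (v * t - t * v))
          - (q * v - v * q) * v * (v * t - t * v) := by noncomm_ring
    rw [key, e1, e2]
    simp
  -- Step 3 : c t c = 0, hence c = 0, i.e. v commutes with dv
  have hc0 : ∀ v ∈ I, v * (q * v - v * q) = (q * v - v * q) * v := by
    intro v hv
    have hctc : ∀ t ∈ I,
        (v * (q * v - v * q) - (q * v - v * q) * v) * t *
          (v * (q * v - v * q) - (q * v - v * q) * v) = 0 := by
      intro t ht
      have e1 := hc1 v hv (t * (q * v - v * q)) (hmulIA ht (hdA hv))
      have e2 := hc1 v hv t ht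
      have key : (v * (q * v - v * q) - (q * v - v * q) * v) * t *
            (v * (q * v - v * q) - (q * v - v * q) * v) =
          (v * (q * v - v * q) - (q * v - v * q) * v) *
              (v * (t * (q * v - v * q)) - t * (q * v - v * q) * v)
            - ((v * (q * v - v * q) - (q * v - v * q) * v) * (v * t - t * v)) *
                (q * v - v * q) := by noncomm_ring
      rw [key, e1, e2]
      simp
    have hcA : v * (q * v - v * q) - (q * v - v * q) * v ∈ A :=
      A.sub_mem (A.mul_mem (hIA hv) (hdA hv)) (A.mul_mem (hdA hv) (hIA hv))
    have := stmt9_midzero hsemi hQs hIess hcA hctc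
    exact sub_eq_zero.mp this
  -- Step 4 : dv commutes with I
  have h7 : ∀ v ∈ I, ∀ w ∈ I, w * (q * v - v * q) = (q * v - v * q) * w := by
    intro v hv w hw
    have t1 := hc0 (v + w) (I.add_mem hv hw)
    have t2 := hc0 v hv
    have t3 := hc0 w hw
    have t4 := hcomm v hv w hw
    have dbl : (w * (q * v - v * q) - (q * v - v * q) * w) +
          (w * (q * v - v * q) - (q * v - v * q) * w) =
        ((v + w) * (q * (v + w) - (v + w) * q) - (q * (v + w) - (v + w) * q) * (v + w))
          - (v * (q * v - v * q) - (q * v - v * q) * v)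
          - (w * (q * w - w * q) - (q * w - w * q) * w)
          - (q * (v * w - w * v) - (v * w - w * v) * q) := by noncomm_ring
    rw [t1, t2, t3, t4] at dbl
    simp only [sub_self, zero_sub, sub_zero, neg_zero] at dbl
    have hmem : w * (q * v - v * q) - (q * v - v * q) * w ∈ A :=
      A.sub_mem (A.mul_mem (hIA hw) (hdA hv)) (A.mul_mem (hdA hv) (hIA hw))
    exact sub_eq_zero.mp (h2 _ hmem dbl)
  -- Step 5 : dv commutes with A
  have h8 : ∀ v ∈ I, ∀ a ∈ A, a * (q * v - v * q) = (q * v - v * q) * a := by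
    intro v hv a ha
    have key : ∀ z ∈ I, ((q * v - v * q) * a - a * (q * v - v * q)) * z = 0 := by
      intro z hz
      have e1 := h7 v hv (a * z) (hmulAI ha hz)
      have e2 := h7 v hv z hz
      have expand : ((q * v - v * q) * a - a * (q * v - v * q)) * z =
          (q * v - v * q) * (a * z) - a * (z * (q * v - v * q)) := by
        rw [e2]; noncomm_ring
      rw [expand, ← e1]
      noncomm_ring
    have := stmt9_annR hQs hIess key
    have := sub_eq_zero.mp this
    exact this.symm
  -- Step 6 : dv commutes with q
  have h9 : ∀ v ∈ I, (q * v - v * q) * q = q * (q * v - v * q) := by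
    intro v hv
    have key : ∀ z ∈ I, ((q * v - v * q) * q - q * (q * v - v * q)) * z = 0 := by
      intro z hz
      have e1 := h8 v hv (q * z) (habs z hz).1
      have e2 := h7 v hv z hz
      have expand : ((q * v - v * q) * q - q * (q * v - v * q)) * z =
          (q * v - v * q) * (q * z) - q * (z * (q * v - v * q)) := by
        rw [e2]; noncomm_ring
      rw [expand, ← e1]
      noncomm_ring
    exact sub_eq_zero.mp (stmt9_annR hQs hIess key)
  -- Step 7 : du · dv = 0
  have h10 : ∀ u ∈ I, ∀ v ∈ I, (q * u - u * q) * (q * v - v * q) = 0 := by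
    intro u hu v hv
    have k1 : (q * u - u * q) * q - q * (q * u - u * q) = 0 :=
      sub_eq_zero.mpr (h9 u hu)
    have k2 : (q * v - v * q) * q - q * (q * v - v * q) = 0 :=
      sub_eq_zero.mpr (h9 v hv)
    have k3 : (q * (u * v) - u * v * q) * q - q * (q * (u * v) - u * v * q) = 0 :=
      sub_eq_zero.mpr (h9 (u * v) (hmulII hu hv))
    have key : (q * u - u * q) * (q * v - v * q) + (q * u - u * q) * (q * v - v * q) =
        ((q * u - u * q) * q - q * (q * u - u * q)) * v
          + u * ((q * v - v * q) * q - q * (q * v - v * q))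
          - ((q * (u * v) - u * v * q) * q - q * (q * (u * v) - u * v * q)) := by
      noncomm_ring
    rw [k1, k2, k3] at key
    simp only [zero_mul, mul_zero, add_zero, sub_zero, zero_add] at key
    exact h2 _ (A.mul_mem (hdA hu) (hdA hv)) key
  -- Step 8 : dx t dx = 0, conclude
  intro x hx
  have h11 : ∀ t ∈ I, (q * x - x * q) * t * (q * x - x * q) = 0 := by
    intro t ht
    have e1 := h10 x hx (t * x) (hmulII ht hx)
    have e2 := h10 x hx t ht
    have key : (q * x - x * q) * t * (q * x - x * q) =
        (q * x - x * q) * (q * (t * x) - t * x * q)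
          - ((q * x - x * q) * (q * t - t * q)) * x := by noncomm_ring
    rw [key, e1, e2]
    simp
  exact sub_eq_zero.mp (stmt9_midzero hsemi hQs hIess (hdA hx) h11)
end

section
/- Let A be a semiprime 2-torsion free associative algebra and Q a subalgebra of Q_s(A) containing A. Then the Lie algebras A⁽⁻⁾/Z(A) and Q⁽⁻⁾/Z(Q) are semiprime, and Q⁽⁻⁾/Z(Q) is a Lie algebra of quotients of A⁽⁻⁾/Z(A). -/
section
variable (R : Type*) [NonUnitalRing R]

/-- The centre of the associative ring `R`. -/
def ringCentre : Set R := {z | ∀ w : R, z * w = w * z}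

/-- `K` is a Lie ideal of the subring `A` of `R` (for the commutator bracket). -/
def IsLieIdealOfSub (A : NonUnitalSubring R) (K : AddSubgroup R) : Prop :=
  (K : Set R) ⊆ A ∧ ∀ a ∈ A, ∀ k ∈ K, a * k - k * a ∈ K

/-- Semiprimeness of the Lie algebra `A⁽⁻⁾/Z(A)`:
every Lie ideal of `A` whose bracket lands in the centre is central. -/
def LieModCentreSemiprime (A : NonUnitalSubring R) : Prop :=
  ∀ K : AddSubgroup R, IsLieIdealOfSub R A K →
    (∀ x ∈ K, ∀ y ∈ K, x * y - y * x ∈ ringCentre R) →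
    (K : Set R) ⊆ ringCentre R

end

section Aux

variable {R : Type*} [NonUnitalRing R] {A : NonUnitalSubring R}

lemma aux_ringCentre_zero : (0 : R) ∈ ringCentre R := fun w => by
  rw [zero_mul, mul_zero]

lemma aux_ringCentre_neg {z : R} (h : z ∈ ringCentre R) : -z ∈ ringCentre R := fun w => by
  rw [neg_mul, mul_neg, h w]

/-- If `u ∈ A` with `u² = 0` and `uAu = 0`, semiprimeness of `A` forces `u = 0`. -/
lemma aux_sp (hsemi : IsSemiprimeSub R A) (u : R) (hu : u ∈ A)
    (h1 : u * u = 0) (hm : ∀ a ∈ A, u * (a * u) = 0) : u = 0 := by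
  set S : Set R := {x | u = x ∨ (∃ a ∈ A, x = a * u) ∨ (∃ a ∈ A, x = u * a) ∨
      (∃ a ∈ A, ∃ b ∈ A, x = a * u * b)} with hSdef
  have huS : u ∈ S := Or.inl rfl
  have hSA : ∀ x ∈ S, x ∈ A := by
    rintro x (rfl | ⟨a, ha, rfl⟩ | ⟨a, ha, rfl⟩ | ⟨a, ha, b, hb, rfl⟩)
    · exact hu
    · exact A.mul_mem ha hu
    · exact A.mul_mem hu ha
    · exact A.mul_mem (A.mul_mem ha hu) hb
  have hmulL : ∀ c ∈ A, ∀ s ∈ S, c * s ∈ S := by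
    rintro c hc s (rfl | ⟨a, ha, rfl⟩ | ⟨a, ha, rfl⟩ | ⟨a, ha, b, hb, rfl⟩)
    · exact Or.inr (Or.inl ⟨c, hc, rfl⟩)
    · exact Or.inr (Or.inl ⟨c * a, A.mul_mem hc ha, by simp only [mul_assoc]⟩)
    · exact Or.inr (Or.inr (Or.inr ⟨c, hc, a, ha, by simp only [mul_assoc]⟩))
    · exact Or.inr (Or.inr (Or.inr ⟨c * a, A.mul_mem hc ha, b, hb, by simp only [mul_assoc]⟩))
  have hmulR : ∀ c ∈ A, ∀ s ∈ S, s * c ∈ S := by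
    rintro c hc s (rfl | ⟨a, ha, rfl⟩ | ⟨a, ha, rfl⟩ | ⟨a, ha, b, hb, rfl⟩)
    · exact Or.inr (Or.inr (Or.inl ⟨c, hc, rfl⟩))
    · exact Or.inr (Or.inr (Or.inr ⟨a, ha, c, hc, rfl⟩))
    · exact Or.inr (Or.inr (Or.inl ⟨a * c, A.mul_mem ha hc, by simp only [mul_assoc]⟩))
    · exact Or.inr (Or.inr (Or.inr ⟨a, ha, b * c, A.mul_mem hb hc, by simp only [mul_assoc]⟩))
  have hgen : ∀ s ∈ S, ∀ t ∈ S, s * t = 0 := by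
    rintro s (rfl | ⟨a, ha, rfl⟩ | ⟨a, ha, rfl⟩ | ⟨a, ha, b, hb, rfl⟩) t
        (rfl | ⟨c, hc, rfl⟩ | ⟨c, hc, rfl⟩ | ⟨c, hc, d, hd, rfl⟩)
    · exact h1
    · exact hm c hc
    · rw [← mul_assoc, h1, zero_mul]
    · have e : u * (c * u * d) = (u * (c * u)) * d := by simp only [mul_assoc]
      rw [e, hm c hc, zero_mul]
    · rw [mul_assoc, h1, mul_zero]
    · have e : (a * u) * (c * u) = a * (u * (c * u)) := by simp only [mul_assoc]
      rw [e, hm c hc, mul_zero]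
    · have e : (a * u) * (u * c) = a * ((u * u) * c) := by simp only [mul_assoc]
      rw [e, h1, zero_mul, mul_zero]
    · have e : (a * u) * (c * u * d) = a * ((u * (c * u)) * d) := by simp only [mul_assoc]
      rw [e, hm c hc, zero_mul, mul_zero]
    · rw [mul_assoc]; exact hm a ha
    · have e : (u * a) * (c * u) = u * ((a * c) * u) := by simp only [mul_assoc]
      rw [e, hm (a * c) (A.mul_mem ha hc)]
    · have e : (u * a) * (u * c) = (u * (a * u)) * c := by simp only [mul_assoc]
      rw [e, hm a ha, zero_mul]
    · have e : (u * a) * (c * u * d) = (u * ((a * c) * u)) * d := by simp only [mul_assoc]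
      rw [e, hm (a * c) (A.mul_mem ha hc), zero_mul]
    · have e : (a * u * b) * u = a * (u * (b * u)) := by simp only [mul_assoc]
      rw [e, hm b hb, mul_zero]
    · have e : (a * u * b) * (c * u) = a * (u * ((b * c) * u)) := by simp only [mul_assoc]
      rw [e, hm (b * c) (A.mul_mem hb hc), mul_zero]
    · have e : (a * u * b) * (u * c) = a * ((u * (b * u)) * c) := by simp only [mul_assoc]
      rw [e, hm b hb, zero_mul, mul_zero]
    · have e : (a * u * b) * (c * u * d) = a * ((u * ((b * c) * u)) * d) := by
        simp only [mul_assoc]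
      rw [e, hm (b * c) (A.mul_mem hb hc), zero_mul, mul_zero]
  set I : AddSubgroup R := AddSubgroup.closure S with hIdef
  have hIA : (I : Set R) ⊆ A := by
    intro x hx
    refine AddSubgroup.closure_induction (p := fun y _ => y ∈ A) hSA A.zero_mem
      (fun p q _ _ hp hq => A.add_mem hp hq) (fun p _ hp => A.neg_mem hp) hx
  have hidl : IsIdealOfSub R A I := by
    refine ⟨hIA, fun a ha x hx => ?_⟩
    refine AddSubgroup.closure_induction
      (p := fun y _ => a * y ∈ I ∧ y * a ∈ I)
      (fun s hs => ⟨AddSubgroup.subset_closure (hmulL a ha s hs),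
        AddSubgroup.subset_closure (hmulR a ha s hs)⟩)
      ⟨by rw [mul_zero]; exact I.zero_mem, by rw [zero_mul]; exact I.zero_mem⟩
      (fun p q _ _ hp hq => ⟨by rw [mul_add]; exact I.add_mem hp.1 hq.1,
        by rw [add_mul]; exact I.add_mem hp.2 hq.2⟩)
      (fun p _ hp => ⟨by rw [mul_neg]; exact I.neg_mem hp.1,
        by rw [neg_mul]; exact I.neg_mem hp.2⟩) hx
  have hSz : ∀ s ∈ S, ∀ y ∈ I, s * y = 0 := by
    intro s hs y hy
    refine AddSubgroup.closure_induction (p := fun y _ => s * y = 0)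
      (fun t ht => hgen s hs t ht) (mul_zero s)
      (fun p q _ _ hp hq => by
        have hp' : s * p = 0 := hp
        have hq' : s * q = 0 := hq
        show s * (p + q) = 0
        rw [mul_add, hp', hq', add_zero])
      (fun p _ hp => by
        have hp' : s * p = 0 := hp
        show s * (-p) = 0
        rw [mul_neg, hp', neg_zero]) hy
  have hz : ∀ x ∈ I, ∀ y ∈ I, x * y = 0 := by
    intro x hx y hy
    refine AddSubgroup.closure_induction (p := fun x _ => x * y = 0)
      (fun s hs => hSz s hs y hy) (zero_mul y)
      (fun p q _ _ hp hq => by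
        have hp' : p * y = 0 := hp
        have hq' : q * y = 0 := hq
        show (p + q) * y = 0
        rw [add_mul, hp', hq', add_zero])
      (fun p _ hp => by
        have hp' : p * y = 0 := hp
        show (-p) * y = 0
        rw [neg_mul, hp', neg_zero]) hx
  have hbot : I = ⊥ := hsemi I hidl hz
  have : u ∈ I := AddSubgroup.subset_closure huS
  rw [hbot] at this
  exact AddSubgroup.mem_bot.mp this

/-- An element annihilating an essential ideal on the right is zero. -/
lemma aux_ann (hQs : IsSymmetricQuotientRingOf R A) {I : AddSubgroup R}
    (hI : IsEssentialIdealOfSub R A I) {c : R} (h : ∀ x ∈ I, c * x = 0) : c = 0 := by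
  by_contra hc
  obtain ⟨x, hxI, hx⟩ := (hQs.2 c hc I hI).2
  exact hx (h x hxI)

/-- An element of `R` commuting with all of `A` is central in `R`. -/
lemma aux_centA (hQs : IsSymmetricQuotientRingOf R A) {x : R}
    (h : ∀ a ∈ A, x * a = a * x) : x ∈ ringCentre R := by
  intro q
  obtain ⟨I, hI, hIq⟩ := hQs.1 q
  have key : ∀ y ∈ I, (x * q - q * x) * y = 0 := by
    intro y hy
    have h1 : x * (q * y) = (q * y) * x := h _ (hIq y hy).1
    have h2 : x * y = y * x := h y (hI.1.1 hy)
    calc (x * q - q * x) * y = x * (q * y) - q * (x * y) := by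
          rw [sub_mul, mul_assoc, mul_assoc]
      _ = (q * y) * x - q * (y * x) := by rw [h1, h2]
      _ = 0 := by rw [mul_assoc, sub_self]
  exact sub_eq_zero.mp (aux_ann hQs hI key)

/-- `R` is 2-torsion free. -/
lemma aux_tor (h2 : ∀ x ∈ A, x + x = 0 → x = 0) (hQs : IsSymmetricQuotientRingOf R A) :
    ∀ q : R, q + q = 0 → q = 0 := by
  intro q hq
  by_contra hq0
  obtain ⟨I, hI, hIq⟩ := hQs.1 q
  obtain ⟨x, hxI, hx⟩ := (hQs.2 q hq0 I hI).1
  refine hx (h2 (x * q) (hIq x hxI).2 ?_)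
  rw [← mul_add, hq, mul_zero]

/-- A central element of `R` of square zero is zero. -/
lemma aux_zsq (hsemi : IsSemiprimeSub R A) (hQs : IsSymmetricQuotientRingOf R A)
    {z : R} (hz : z ∈ ringCentre R) (hzz : z * z = 0) : z = 0 := by
  by_contra h0
  obtain ⟨I, hI, hIz⟩ := hQs.1 z
  obtain ⟨x, hxI, hx⟩ := (hQs.2 z h0 I hI).1
  have hvA : x * z ∈ A := (hIz x hxI).2
  have hv2 : (x * z) * (x * z) = 0 := by
    calc (x * z) * (x * z) = x * (z * (x * z)) := by rw [mul_assoc]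
      _ = x * ((x * z) * z) := by rw [hz (x * z)]
      _ = x * (x * (z * z)) := by rw [mul_assoc]
      _ = 0 := by rw [hzz, mul_zero, mul_zero]
  have hvm : ∀ a ∈ A, (x * z) * (a * (x * z)) = 0 := by
    intro a ha
    calc (x * z) * (a * (x * z)) = x * (z * (a * (x * z))) := by rw [mul_assoc]
      _ = x * ((a * (x * z)) * z) := by rw [hz (a * (x * z))]
      _ = x * (a * (x * (z * z))) := by simp only [mul_assoc]
      _ = 0 := by rw [hzz, mul_zero, mul_zero, mul_zero]
  exact hx (aux_sp hsemi (x * z) hvA hv2 hvm)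

/-- An element of `R` with `u² = 0` and `uRu = 0` is zero. -/
lemma aux_usq (hsemi : IsSemiprimeSub R A) (hQs : IsSymmetricQuotientRingOf R A)
    {u : R} (h1 : u * u = 0) (hm : ∀ r : R, u * (r * u) = 0) : u = 0 := by
  by_contra h0
  obtain ⟨I, hI, hIu⟩ := hQs.1 u
  obtain ⟨x, hxI, hx⟩ := (hQs.2 u h0 I hI).1
  have hwA : x * u ∈ A := (hIu x hxI).2
  have hw2 : (x * u) * (x * u) = 0 := by
    calc (x * u) * (x * u) = x * (u * (x * u)) := by rw [mul_assoc]
      _ = 0 := by rw [hm x, mul_zero]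
  have hwm : ∀ a ∈ A, (x * u) * (a * (x * u)) = 0 := by
    intro a ha
    calc (x * u) * (a * (x * u)) = x * (u * ((a * x) * u)) := by simp only [mul_assoc]
      _ = 0 := by rw [hm (a * x), mul_zero]
  exact hx (aux_sp hsemi (x * u) hwA hw2 hwm)

/-- Key computation: if `[k,[k,a]]` is central for all `a` in a multiplicatively closed
set `B` containing `k`, then `k` commutes with `B` (given suitable semiprimeness input). -/
lemma aux_adad (htor : ∀ x : R, x + x = 0 → x = 0)
    (hzz : ∀ z : R, z ∈ ringCentre R → z * z = 0 → z = 0)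
    (B : Set R) (hBmul : ∀ x ∈ B, ∀ y ∈ B, x * y ∈ B)
    (k : R) (hkB : k ∈ B)
    (hc : ∀ a ∈ B, k * (k * a - a * k) - (k * a - a * k) * k ∈ ringCentre R)
    (hfin : ∀ a ∈ B, (k * a - a * k) * (k * a - a * k) = 0 →
        (∀ r ∈ B, (k * a - a * k) * (r * (k * a - a * k)) = 0) → k * a - a * k = 0) :
    ∀ a ∈ B, k * a = a * k := by
  have hdd : ∀ a ∈ B, k * (k * a - a * k) - (k * a - a * k) * k = 0 := by
    intro a ha
    set z := k * (k * a - a * k) - (k * a - a * k) * k with hzdef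
    have hzC : z ∈ ringCentre R := hc a ha
    have hkzC : k * z ∈ ringCentre R := by
      have h2 := hc (k * a) (hBmul k hkB a ha)
      have e : k * (k * (k * a) - (k * a) * k) - (k * (k * a) - (k * a) * k) * k = k * z := by
        rw [hzdef]; noncomm_ring
      rwa [e] at h2
    have hzd : ∀ b : R, z * (k * b - b * k) = 0 := by
      intro b
      have e1 : z * (k * b) = (k * z) * b := by rw [← mul_assoc, hzC k]
      have e2 : (k * z) * b = b * (k * z) := hkzC b
      have e3 : b * (k * z) = (b * k) * z := by rw [mul_assoc]
      have e4 : (b * k) * z = z * (b * k) := (hzC (b * k)).symm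
      rw [mul_sub, e1, e2, e3, e4, sub_self]
    have hz2 : z * z = 0 := by
      have h := hzd (k * a - a * k)
      rw [← hzdef] at h
      exact h
    exact hzz z hzC hz2
  have hdd2 : ∀ a ∈ B, ∀ b ∈ B, (k * a - a * k) * (k * b - b * k) = 0 := by
    intro a ha b hb
    have h1 := hdd (a * b) (hBmul a ha b hb)
    have h2 := hdd a ha
    have h3 := hdd b hb
    have key : (k * a - a * k) * (k * b - b * k) + (k * a - a * k) * (k * b - b * k)
        = (k * (k * (a * b) - (a * b) * k) - (k * (a * b) - (a * b) * k) * k)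
          - (k * (k * a - a * k) - (k * a - a * k) * k) * b
          - a * (k * (k * b - b * k) - (k * b - b * k) * k) := by
      noncomm_ring
    apply htor
    rw [key, h1, h2, h3, zero_mul, mul_zero, sub_zero, sub_zero]
  intro a ha
  have hu2 : (k * a - a * k) * (k * a - a * k) = 0 := hdd2 a ha a ha
  have hum : ∀ r ∈ B, (k * a - a * k) * (r * (k * a - a * k)) = 0 := by
    intro r hr
    have h1 := hdd2 a ha (r * a) (hBmul r hr a ha)
    have h2 := hdd2 a ha r hr
    have key : (k * a - a * k) * (r * (k * a - a * k))
        = (k * a - a * k) * (k * (r * a) - (r * a) * k)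
          - ((k * a - a * k) * (k * r - r * k)) * a := by noncomm_ring
    rw [key, h1, h2, zero_mul, sub_zero]
  exact sub_eq_zero.mp (hfin a ha hu2 hum)

end Aux

/-- If `A` is a semiprime `2`-torsion free associative algebra and
`A ⊆ Q ⊆ Q_s(A)` (here `R` plays the role of `Q`), then the Lie algebras
`A⁽⁻⁾/Z(A)` and `Q⁽⁻⁾/Z(Q)` are semiprime, and `Q⁽⁻⁾/Z(Q)` is a Lie algebra of
quotients of `A⁽⁻⁾/Z(A)` (all statements being read modulo the centre). -/
theorem stmt10 {R : Type*} [NonUnitalRing R] (A : NonUnitalSubring R)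
    (hsemi : IsSemiprimeSub R A)
    (h2 : ∀ x ∈ A, x + x = 0 → x = 0)
    (hQs : IsSymmetricQuotientRingOf R A) :
    LieModCentreSemiprime R A ∧
    LieModCentreSemiprime R (⊤ : NonUnitalSubring R) ∧
    (∀ q : R, q ∉ ringCentre R →
      ∃ K : AddSubgroup R, IsLieIdealOfSub R A K ∧
        (∀ x ∈ A, (∀ k ∈ K, x * k - k * x ∈ ringCentre R) → x ∈ ringCentre R) ∧
        (∃ k ∈ K, k * q - q * k ∉ ringCentre R) ∧
        (∀ k ∈ K, ∃ a ∈ A, k * q - q * k - a ∈ ringCentre R)) := by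
  have htor : ∀ q : R, q + q = 0 → q = 0 := aux_tor h2 hQs
  have hzzR : ∀ z : R, z ∈ ringCentre R → z * z = 0 → z = 0 :=
    fun z hz hzz => aux_zsq hsemi hQs hz hzz
  refine ⟨?_, ?_, ?_⟩
  · -- A⁽⁻⁾/Z is semiprime
    intro K hK hKK x hx
    have hxA : x ∈ A := hK.1 hx
    have hc : ∀ a ∈ (A : Set R), x * (x * a - a * x) - (x * a - a * x) * x ∈ ringCentre R := by
      intro a ha
      have hm : a * x - x * a ∈ K := hK.2 a ha x hx
      have hz := hKK x hx _ hm
      have e : x * (x * a - a * x) - (x * a - a * x) * x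
          = -(x * (a * x - x * a) - (a * x - x * a) * x) := by noncomm_ring
      rw [e]; exact aux_ringCentre_neg hz
    have hfin : ∀ a ∈ (A : Set R), (x * a - a * x) * (x * a - a * x) = 0 →
        (∀ r ∈ (A : Set R), (x * a - a * x) * (r * (x * a - a * x)) = 0) →
        x * a - a * x = 0 := by
      intro a ha h1 hm
      exact aux_sp hsemi _ (A.sub_mem (A.mul_mem hxA ha) (A.mul_mem ha hxA)) h1
        (fun r hr => hm r hr)
    have hcomm := aux_adad htor hzzR (A : Set R)
      (fun p hp q hq => A.mul_mem hp hq) x hxA hc hfin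
    exact aux_centA hQs (fun a ha => hcomm a ha)
  · -- Q⁽⁻⁾/Z is semiprime
    intro K hK hKK x hx
    have hc : ∀ a ∈ (Set.univ : Set R),
        x * (x * a - a * x) - (x * a - a * x) * x ∈ ringCentre R := by
      intro a _
      have hm : a * x - x * a ∈ K := hK.2 a (NonUnitalSubring.mem_top a) x hx
      have hz := hKK x hx _ hm
      have e : x * (x * a - a * x) - (x * a - a * x) * x
          = -(x * (a * x - x * a) - (a * x - x * a) * x) := by noncomm_ring
      rw [e]; exact aux_ringCentre_neg hz
    have hfin : ∀ a ∈ (Set.univ : Set R), (x * a - a * x) * (x * a - a * x) = 0 →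
        (∀ r ∈ (Set.univ : Set R), (x * a - a * x) * (r * (x * a - a * x)) = 0) →
        x * a - a * x = 0 := by
      intro a _ h1 hm
      exact aux_usq hsemi hQs h1 (fun r => hm r trivial)
    have hcomm := aux_adad htor hzzR Set.univ
      (fun _ _ _ _ => trivial) x trivial hc hfin
    exact fun w => hcomm w trivial
  · -- quotient property
    intro q hq
    obtain ⟨I, hI, hIq⟩ := hQs.1 q
    have L8 : ∀ x : R, (∀ k ∈ I, x * k - k * x ∈ ringCentre R) →
        (∀ k ∈ I, x * k - k * x ∈ A) → x ∈ ringCentre R := by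
      intro x hxc hxA
      have hIze : ∀ k ∈ I, x * k - k * x = 0 := by
        intro k hk
        set z := x * k - k * x with hzdef
        have hzC : z ∈ ringCentre R := hxc k hk
        have hkA : k ∈ A := hI.1.1 hk
        have hkk : k * k ∈ I := (hI.1.2 k hkA k hk).1
        have hz2C : x * (k * k) - (k * k) * x ∈ ringCentre R := hxc (k * k) hkk
        have hid : x * (k * k) - (k * k) * x = z * k + k * z := by
          rw [hzdef]; noncomm_ring
        rw [hid] at hz2C
        have hkz : k * z = z * k := (hzC k).symm
        have czk : z * z = x * (z * k) - (z * k) * x := by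
          have c1 : z * (k * x) = (z * k) * x := (mul_assoc z k x).symm
          have c2 : z * (x * k) = x * (z * k) := by
            rw [← mul_assoc, hzC x, mul_assoc]
          calc z * z = z * (x * k - k * x) := by rw [← hzdef]
            _ = z * (x * k) - z * (k * x) := mul_sub z _ _
            _ = x * (z * k) - (z * k) * x := by rw [c1, c2]
        have hsum : x * (z * k) - (z * k) * x + (x * (z * k) - (z * k) * x) = 0 := by
          have e := hz2C x
          rw [hkz] at e
          rw [add_mul, mul_add] at e
          rw [sub_add_sub_comm, ← e, sub_self]
        have hzz0 : z * z + z * z = 0 := by rw [czk]; exact hsum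
        have hzA : z ∈ A := hxA k hk
        have hzz : z * z = 0 := h2 (z * z) (A.mul_mem hzA hzA) hzz0
        exact hzzR z hzC hzz
      have hxAcomm : ∀ a ∈ A, x * a = a * x := by
        intro a ha
        have key : ∀ y ∈ I, (x * a - a * x) * y = 0 := by
          intro y hy
          have hay : a * y ∈ I := (hI.1.2 a ha y hy).1
          have e1 : x * (a * y) = (a * y) * x := sub_eq_zero.mp (hIze (a * y) hay)
          have e2 : x * y = y * x := sub_eq_zero.mp (hIze y hy)
          calc (x * a - a * x) * y = x * (a * y) - a * (x * y) := by noncomm_ring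
            _ = (a * y) * x - a * (y * x) := by rw [e1, e2]
            _ = 0 := by rw [mul_assoc, sub_self]
        exact sub_eq_zero.mp (aux_ann hQs hI key)
      exact aux_centA hQs hxAcomm
    refine ⟨I, ⟨hI.1.1, fun a ha k hk => I.sub_mem (hI.1.2 a ha k hk).1 (hI.1.2 a ha k hk).2⟩,
      ?_, ?_, ?_⟩
    · intro x hxA hxc
      exact L8 x hxc (fun k hk =>
        A.sub_mem (A.mul_mem hxA (hI.1.1 hk)) (A.mul_mem (hI.1.1 hk) hxA))
    · by_contra h
      push_neg at h
      apply hq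
      refine L8 q (fun k hk => ?_) (fun k hk => A.sub_mem (hIq k hk).1 (hIq k hk).2)
      have e : q * k - k * q = -(k * q - q * k) := by rw [neg_sub]
      rw [e]
      exact aux_ringCentre_neg (h k hk)
    · intro k hk
      exact ⟨k * q - q * k, A.sub_mem (hIq k hk).2 (hIq k hk).1,
        by rw [sub_self]; exact aux_ringCentre_zero⟩
end

section
/- Let L ⊆ Q be an extension of Lie algebras with L semiprime, and suppose Q is an algebra of quotients of L. Then [Q,Q] is an algebra of quotients of [L,L]. -/
section
variable (Φ : Type*) [CommRing Φ] (Q : Type*) [LieRing Q] [LieAlgebra Φ Q]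

/-- `I` is an ideal of the subalgebra with carrier `S`. -/
def IsIdealOf (S : Set Q) (I : Submodule Φ Q) : Prop :=
  (I : Set Q) ⊆ S ∧ ∀ x ∈ S, ∀ y ∈ I, ⁅x, y⁆ ∈ I

/-- The annihilator of `I` in the subalgebra with carrier `S` is zero. -/
def AnnZero (S : Set Q) (I : Submodule Φ Q) : Prop :=
  ∀ a ∈ S, (∀ y ∈ I, ⁅a, y⁆ = (0 : Q)) → a = 0

/-- The Lie algebra with carrier `T` is an algebra of quotients of the
subalgebra with carrier `S`. -/
def IsAlgebraOfQuotients (S T : Set Q) : Prop :=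
  ∀ q ∈ T, q ≠ 0 → ∃ I : Submodule Φ Q, IsIdealOf Φ Q S I ∧ AnnZero Φ Q S I ∧
    (∃ y ∈ I, ⁅y, q⁆ ≠ 0) ∧ ∀ y ∈ I, ⁅y, q⁆ ∈ S

/-- Semiprimeness of the subalgebra with carrier `S`. -/
def LieSemiprimeOn (S : Set Q) : Prop :=
  ∀ I : Submodule Φ Q, IsIdealOf Φ Q S I →
    (∀ a ∈ I, ∀ b ∈ I, ⁅a, b⁆ = (0 : Q)) → I = ⊥

/-- The derived subalgebra `[S,S]`: the span of brackets of elements of `S`. -/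
def derivedOf (S : Set Q) : Submodule Φ Q :=
  Submodule.span Φ {z : Q | ∃ x ∈ S, ∃ y ∈ S, ⁅x, y⁆ = z}

end

section Helpers
variable {Φ : Type*} [CommRing Φ] {Q : Type*} [LieRing Q] [LieAlgebra Φ Q]

/-- Left-multiplication by a fixed element maps a span into a submodule once it
does so on generators. -/
lemma lie_span_mem (x : Q) {s : Set Q} {M : Submodule Φ Q}
    (h : ∀ g ∈ s, ⁅x, g⁆ ∈ M) :
    ∀ y ∈ Submodule.span Φ s, ⁅x, y⁆ ∈ M := by
  intro y hy
  induction hy using Submodule.span_induction with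
  | mem g hg => exact h g hg
  | zero => simp
  | add u v _ _ hu hv => rw [lie_add]; exact M.add_mem hu hv
  | smul c u _ hu => rw [lie_smul]; exact M.smul_mem c hu

lemma span_lie_mem (y : Q) {s : Set Q} {M : Submodule Φ Q}
    (h : ∀ g ∈ s, ⁅g, y⁆ ∈ M) :
    ∀ x ∈ Submodule.span Φ s, ⁅x, y⁆ ∈ M := by
  intro x hx
  have := lie_span_mem (Φ := Φ) y (M := M) (s := s)
    (fun g hg => by rw [← lie_skew]; exact M.neg_mem (h g hg)) x hx
  rw [← lie_skew]
  exact M.neg_mem this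

/-- The annihilator of a submodule, as a submodule. -/
def annSub (J : Submodule Φ Q) : Submodule Φ Q where
  carrier := {b : Q | ∀ z ∈ J, ⁅b, z⁆ = 0}
  zero_mem' := by intro z _; simp
  add_mem' := by intro a b ha hb z hz; rw [add_lie, ha z hz, hb z hz, add_zero]
  smul_mem' := by intro c a ha z hz; rw [smul_lie, ha z hz, smul_zero]

variable {L : LieSubalgebra Φ Q}

lemma derived_subset : (derivedOf Φ Q (L : Set Q) : Set Q) ⊆ (L : Set Q) := by
  intro z hz
  have : derivedOf Φ Q (L : Set Q) ≤ L.toSubmodule := by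
    apply Submodule.span_le.2
    rintro w ⟨x, hx, y, hy, rfl⟩
    exact L.lie_mem hx hy
  exact this hz

/-- The derived submodule of an ideal of `L` is contained in the ideal. -/
lemma derived_le {I : Submodule Φ Q} (hI : IsIdealOf Φ Q (L : Set Q) I) :
    derivedOf Φ Q (I : Set Q) ≤ I := by
  apply Submodule.span_le.2
  rintro w ⟨x, hx, y, hy, rfl⟩
  exact hI.2 x (hI.1 hx) y hy

/-- The derived submodule of an ideal of `L` is again an ideal of `L`. -/
lemma derived_ideal {I : Submodule Φ Q} (hI : IsIdealOf Φ Q (L : Set Q) I) :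
    IsIdealOf Φ Q (L : Set Q) (derivedOf Φ Q (I : Set Q)) := by
  constructor
  · exact fun z hz => hI.1 (derived_le hI hz)
  · intro x hx y hy
    refine lie_span_mem x ?_ y hy
    rintro g ⟨a, ha, b, hb, rfl⟩
    rw [leibniz_lie]
    refine Submodule.add_mem _ ?_ ?_
    · exact Submodule.subset_span ⟨⁅x, a⁆, hI.2 x hx a ha, b, hb, rfl⟩
    · exact Submodule.subset_span ⟨a, ha, ⁅x, b⁆, hI.2 x hx b hb, rfl⟩

/-- In a semiprime Lie algebra, the annihilator of `[I,I]` equals that of `I`. -/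
lemma ann_derived (hsemi : LieSemiprimeOn Φ Q (L : Set Q))
    {I : Submodule Φ Q} (hI : IsIdealOf Φ Q (L : Set Q) I)
    (hann : AnnZero Φ Q (L : Set Q) I) :
    AnnZero Φ Q (L : Set Q) (derivedOf Φ Q (I : Set Q)) := by
  set J := derivedOf Φ Q (I : Set Q) with hJ
  have hJideal := derived_ideal hI
  intro a haL haJ
  -- B = Ann(J) ∩ I is an abelian ideal of L, hence zero
  set B : Submodule Φ Q := annSub J ⊓ I with hB
  have hBideal : IsIdealOf Φ Q (L : Set Q) B := by
    constructor
    · exact fun z hz => hI.1 hz.2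
    · intro x hx b hb
      refine ⟨?_, hI.2 x hx b hb.2⟩
      intro z hz
      rw [lie_lie, hb.1 z hz, lie_zero, hb.1 ⁅x, z⁆ (hJideal.2 x hx z hz), sub_zero]
  -- [B,B] is an abelian ideal of L
  have hDB : derivedOf Φ Q (B : Set Q) = ⊥ := by
    refine hsemi _ (derived_ideal hBideal) ?_
    intro u hu v hv
    have key : ∀ g ∈ {z : Q | ∃ x ∈ (B : Set Q), ∃ y ∈ (B : Set Q), ⁅x, y⁆ = z},
        ∀ h ∈ {z : Q | ∃ x ∈ (B : Set Q), ∃ y ∈ (B : Set Q), ⁅x, y⁆ = z},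
        ⁅g, h⁆ = (0 : Q) := by
      rintro g ⟨b1, hb1, b2, hb2, rfl⟩ h ⟨b3, hb3, b4, hb4, rfl⟩
      have h34 : ⁅b3, b4⁆ ∈ J :=
        Submodule.subset_span ⟨b3, (Submodule.mem_inf.mp hb3).2, b4, (Submodule.mem_inf.mp hb4).2, rfl⟩
      rw [lie_lie, hb2.1 _ h34, lie_zero, hb1.1 _ h34, lie_zero, sub_zero]
    have step : ∀ v' ∈ derivedOf Φ Q (B : Set Q), ∀ g ∈
        {z : Q | ∃ x ∈ (B : Set Q), ∃ y ∈ (B : Set Q), ⁅x, y⁆ = z}, ⁅g, v'⁆ = (0 : Q) := by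
      intro v' hv' g hg
      have : ⁅g, v'⁆ ∈ (⊥ : Submodule Φ Q) := by
        refine lie_span_mem g ?_ v' hv'
        intro h hh
        rw [key g hg h hh]; exact Submodule.zero_mem _
      simpa using this
    have : ⁅u, v⁆ ∈ (⊥ : Submodule Φ Q) := by
      refine span_lie_mem v ?_ u hu
      intro g hg
      rw [step v hv g hg]; exact Submodule.zero_mem _
    simpa using this
  have hBbot : B = ⊥ := by
    refine hsemi _ hBideal ?_
    intro u hu v hv
    have : ⁅u, v⁆ ∈ derivedOf Φ Q (B : Set Q) :=
      Submodule.subset_span ⟨u, hu, v, hv, rfl⟩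
    rw [hDB] at this
    simpa using this
  -- now [a, x] ∈ B for every x ∈ I, hence a annihilates I
  refine hann a haL ?_
  intro x hx
  have hmem : ⁅a, x⁆ ∈ B := by
    refine ⟨?_, hI.2 a haL x hx⟩
    intro z hz
    rw [lie_lie, haJ z hz, lie_zero, sub_zero, haJ ⁅x, z⁆ (hJideal.2 x (hI.1 hx) z hz)]
  rw [hBbot] at hmem
  simpa using hmem

end Helpers

/-- If `L ⊆ Q` is an extension of Lie algebras with `L` semiprime
and `Q` an algebra of quotients of `L`, then `[Q,Q]` is an algebra of quotients
of `[L,L]`. -/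
theorem stmt11 {Φ : Type*} [CommRing Φ] {Q : Type*} [LieRing Q] [LieAlgebra Φ Q]
    (L : LieSubalgebra Φ Q)
    (hsemi : LieSemiprimeOn Φ Q (L : Set Q))
    (hquo : IsAlgebraOfQuotients Φ Q (L : Set Q) Set.univ) :
    IsAlgebraOfQuotients Φ Q (derivedOf Φ Q (L : Set Q) : Set Q)
      (derivedOf Φ Q (Set.univ : Set Q) : Set Q) := by
  intro q _ hq0
  obtain ⟨I, hIideal, hIann, ⟨y0, hy0I, hy0⟩, hIq⟩ := hquo q (Set.mem_univ q) hq0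
  set J := derivedOf Φ Q (I : Set Q) with hJdef
  have hJideal := derived_ideal (L := L) hIideal
  have hJann : AnnZero Φ Q (L : Set Q) J := ann_derived hsemi hIideal hIann
  refine ⟨J, ?_, ?_, ?_, ?_⟩
  · -- J is an ideal of [L,L]
    constructor
    · -- J ⊆ [L,L]
      intro z hz
      have hle : J ≤ derivedOf Φ Q (L : Set Q) := by
        apply Submodule.span_mono
        rintro w ⟨x, hx, y, hy, rfl⟩
        exact ⟨x, hIideal.1 hx, y, hIideal.1 hy, rfl⟩
      exact hle hz
    · intro x hx y hy
      exact hJideal.2 x (derived_subset hx) y hy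
  · -- AnnZero [L,L] J
    intro a ha h0
    exact hJann a (derived_subset ha) h0
  · -- ∃ y ∈ J, ⁅y, q⁆ ≠ 0
    by_contra hcon
    push_neg at hcon
    have hzero : ∀ z ∈ I, ⁅z, q⁆ = 0 := by
      intro z hz
      refine hJann ⁅z, q⁆ (hIq z hz) ?_
      intro j hj
      have h1 : ⁅q, j⁆ = 0 := by
        rw [← neg_eq_zero, lie_skew]; exact hcon j hj
      have h2 : ⁅q, ⁅z, j⁆⁆ = 0 := by
        rw [← neg_eq_zero, lie_skew]
        exact hcon _ (hJideal.2 z (hIideal.1 hz) j hj)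
      rw [lie_lie, h1, lie_zero, h2, sub_zero]
    exact hy0 (hzero y0 hy0I)
  · -- ⁅J, q⁆ ⊆ [L,L]
    intro y hy
    refine span_lie_mem q ?_ y hy
    rintro g ⟨a, ha, b, hb, rfl⟩
    rw [lie_lie]
    refine Submodule.sub_mem _ ?_ ?_
    · exact Submodule.subset_span ⟨a, hIideal.1 ha, ⁅b, q⁆, hIq b hb, rfl⟩
    · exact Submodule.subset_span ⟨b, hIideal.1 hb, ⁅a, q⁆, hIq a ha, rfl⟩
end
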